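/- Let P_π be a weighted poset on {1,…,8}. If the extended binary Hamming code H̃₃ (the [8,4,4] extended Hamming code) is a 2-perfect P_π-code, then 1 ≤ Ω₁¹(1) ≤ 4, where Ω₁¹(1) is the number of minimal elements of P_π of weight 1. -/

import Mathlib

set_option maxRecDepth 10000

open Classical

noncomputable def wtP {α : Type*} [Fintype α] (le : α → α → Prop) (π : α → ℕ)
    (x : α → ZMod 2) : ℕ :=
  ∑ j ∈ Finset.univ.filter (fun j => ∃ i, x i ≠ 0 ∧ le j i), π j

noncomputable def dP {α : Type*} [Fintype α] (le : α → α → Prop) (π : α → ℕ)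
    (x y : α → ZMod 2) : ℕ :=
  wtP le π (x - y)

def IsCovering {β : Type*} (d : β → β → ℕ) (C : Set β) (r : ℕ) : Prop :=
  ∀ x, ∃ c ∈ C, d c x ≤ r

def IsPacking {β : Type*} (d : β → β → ℕ) (C : Set β) (r : ℕ) : Prop :=
  ∀ c₁ ∈ C, ∀ c₂ ∈ C, c₁ ≠ c₂ → ∀ x, ¬(d c₁ x ≤ r ∧ d c₂ x ≤ r)

def extHamming (k : ℕ) : Set (Fin (2 ^ k) → ZMod 2) :=
  {x | (∑ i, x i) = 0 ∧
    ∀ j < k, (∑ i ∈ Finset.univ.filter (fun i : Fin (2 ^ k) => Nat.testBit i.val j), x i) = 0}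

noncomputable def Omega {α : Type*} [Fintype α] (le : α → α → Prop) (π : α → ℕ)
    (j ω i : ℕ) : ℕ :=
  (Finset.univ.filter (fun I : Finset α =>
      (∀ a ∈ I, ∀ b, le b a → b ∈ I) ∧
      I.card = i ∧ (∑ a ∈ I, π a) = ω ∧
      (I.filter (fun a => ∀ b ∈ I, le a b → a = b)).card = j)).card

/-! ### Auxiliary definitions and lemmas -/

def E (t : Finset (Fin (2 ^ 3))) : Fin (2 ^ 3) → ZMod 2 := fun i => if i ∈ t then 1 else 0

def planes : List (Finset (Fin (2 ^ 3))) :=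
  [{0,1,2,3},{0,1,4,5},{0,1,6,7},{0,2,4,6},{0,2,5,7},{0,3,4,7},{0,3,5,6},
   {1,2,4,7},{1,2,5,6},{1,3,4,6},{1,3,5,7},{2,3,4,5},{2,3,6,7},{4,5,6,7}]

theorem planes_sub : ∀ s : Finset (Fin (2 ^ 3)), s.card = 5 → ∃ p ∈ planes, p ⊆ s := by
  decide

theorem planes_prop : ∀ p ∈ planes, p.card = 4 ∧ (∑ i, E p i) = 0 ∧
    ∀ j < 3, (∑ i ∈ Finset.univ.filter (fun i : Fin (2 ^ 3) => Nat.testBit i.val j), E p i) = 0 := by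
  decide

lemma neg_eq_self' (v : Fin (2 ^ 3) → ZMod 2) : -v = v := by
  funext i
  have h : ∀ a : ZMod 2, -a = a := by decide
  exact h (v i)

lemma key_lemma (le : Fin (2 ^ 3) → Fin (2 ^ 3) → Prop) (hrefl : ∀ i, le i i)
    (hantisymm : ∀ i j, le i j → le j i → i = j)
    (π : Fin (2 ^ 3) → ℕ) (hπ : ∀ i, 0 < π i)
    (v : Fin (2 ^ 3) → ZMod 2) (hw : wtP le π v ≤ 2)
    (i₁ i₂ : Fin (2 ^ 3)) (hne : i₁ ≠ i₂) (h1 : v i₁ ≠ 0) (h2 : v i₂ ≠ 0) :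
    ∃ a, π a = 1 ∧ ∀ b, le b a → b = a := by
  classical
  set D := Finset.univ.filter (fun j => ∃ i, v i ≠ 0 ∧ le j i) with hD
  have hwD : ∑ j ∈ D, π j ≤ 2 := by rw [hD]; unfold wtP at hw; convert hw
  have hmem : ∀ j i, v i ≠ 0 → le j i → j ∈ D := by
    intro j i hi hle
    rw [hD]
    exact Finset.mem_filter.mpr ⟨Finset.mem_univ _, ⟨i, hi, hle⟩⟩
  have hi1 : i₁ ∈ D := hmem i₁ i₁ h1 (hrefl i₁)
  have hi2 : i₂ ∈ D := hmem i₂ i₂ h2 (hrefl i₂)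
  have hcard : D.card ≤ 2 := by
    calc D.card = ∑ _j ∈ D, 1 := Finset.card_eq_sum_ones D
    _ ≤ ∑ j ∈ D, π j := Finset.sum_le_sum (fun j _ => hπ j)
    _ ≤ 2 := hwD
  have hsub : ({i₁, i₂} : Finset _) ⊆ D := by
    intro z hz
    rcases Finset.mem_insert.mp hz with rfl | hz
    · exact hi1
    · exact (Finset.mem_singleton.mp hz) ▸ hi2
  have hDeq : D = {i₁, i₂} := (Finset.eq_of_subset_of_card_le hsub (by
    rw [Finset.card_pair hne]; exact hcard)).symm
  have hsum : π i₁ + π i₂ ≤ 2 := by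
    rw [hDeq, Finset.sum_pair hne] at hwD
    exact hwD
  have hp1 : π i₁ = 1 := by have := hπ i₁; have := hπ i₂; omega
  have hp2 : π i₂ = 1 := by have := hπ i₁; have := hπ i₂; omega
  by_cases hmin : ∀ b, le b i₁ → b = i₁
  · exact ⟨i₁, hp1, hmin⟩
  · push_neg at hmin
    obtain ⟨b, hble, hbne⟩ := hmin
    have hbD : b ∈ D := hmem b i₁ h1 hble
    have hb2 : b = i₂ := by
      rw [hDeq] at hbD
      rcases Finset.mem_insert.mp hbD with h | h
      · exact absurd h hbne
      · exact Finset.mem_singleton.mp h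
    have h21 : le i₂ i₁ := hb2 ▸ hble
    refine ⟨i₂, hp2, ?_⟩
    intro c hc
    have hcD : c ∈ D := hmem c i₂ h2 hc
    rw [hDeq] at hcD
    rcases Finset.mem_insert.mp hcD with rfl | h
    · exact hantisymm c i₂ hc h21
    · exact Finset.mem_singleton.mp h

lemma wtP_E (le : Fin (2 ^ 3) → Fin (2 ^ 3) → Prop) (hrefl : ∀ i, le i i)
    (π : Fin (2 ^ 3) → ℕ) (t : Finset (Fin (2 ^ 3)))
    (ht : ∀ a ∈ t, π a = 1 ∧ ∀ b, le b a → b = a) :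
    wtP le π (E t) = t.card := by
  classical
  have hfil : (Finset.univ.filter (fun j => ∃ i, E t i ≠ 0 ∧ le j i)) = t := by
    ext j
    simp only [Finset.mem_filter, Finset.mem_univ, true_and]
    constructor
    · rintro ⟨i, hi, hle⟩
      have hit : i ∈ t := by
        by_contra h
        simp [E, h] at hi
      have hji := (ht i hit).2 j hle
      rwa [hji]
    · intro hj
      refine ⟨j, ?_, hrefl j⟩
      simp [E, hj]
  have h1 : wtP le π (E t) = ∑ j ∈ t, π j := by
    unfold wtP
    convert Finset.sum_congr hfil (fun _ _ => rfl)
  rw [h1, Finset.sum_congr rfl (fun a ha => (ht a ha).1)]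
  simp

lemma E_sub {p q : Finset (Fin (2 ^ 3))} (h : q ⊆ p) : E p - E q = E (p \ q) := by
  funext i
  simp only [Pi.sub_apply, E, Finset.mem_sdiff]
  by_cases hq : i ∈ q
  · simp [hq, h hq]
  · by_cases hp : i ∈ p
    · simp [hq, hp]
    · simp [hq, hp]

theorem stmt_15
    (le : Fin (2 ^ 3) → Fin (2 ^ 3) → Prop)
    (hrefl : ∀ i, le i i)
    (hantisymm : ∀ i j, le i j → le j i → i = j)
    (htrans : ∀ i j l, le i j → le j l → le i l)
    (π : Fin (2 ^ 3) → ℕ) (hπ : ∀ i, 0 < π i)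
    (hperf : IsCovering (dP le π) (extHamming 3) 2 ∧
      IsPacking (dP le π) (extHamming 3) 2) :
    1 ≤ Omega le π 1 1 1 ∧ Omega le π 1 1 1 ≤ 4 := by
  classical
  obtain ⟨hcov, hpack⟩ := hperf
  set S := Finset.univ.filter (fun a : Fin (2 ^ 3) => π a = 1 ∧ ∀ b, le b a → b = a)
    with hSdef
  have hOmega : Omega le π 1 1 1 = S.card := by
    unfold Omega
    rw [← Finset.card_image_of_injective S Finset.singleton_injective]
    congr 1
    ext I
    simp only [Finset.mem_filter, Finset.mem_univ, true_and, Finset.mem_image, hSdef]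
    constructor
    · rintro ⟨hdc, hcard, hsum, -⟩
      obtain ⟨a, rfl⟩ := Finset.card_eq_one.mp hcard
      refine ⟨a, ⟨?_, ?_⟩, rfl⟩
      · rwa [Finset.sum_singleton] at hsum
      · intro b hb
        exact Finset.mem_singleton.mp (hdc a (Finset.mem_singleton_self a) b hb)
    · rintro ⟨a, ⟨hp1, hmin⟩, rfl⟩
      refine ⟨?_, Finset.card_singleton a, ?_, ?_⟩
      · intro x hx b hb
        rw [Finset.mem_singleton] at hx ⊢
        subst hx
        exact hmin b hb
      · rw [Finset.sum_singleton]; exact hp1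
      · have hpred : ∀ b ∈ ({a} : Finset (Fin (2 ^ 3))), le a b → a = b := by
          intro b hb _
          exact (Finset.mem_singleton.mp hb).symm
        rw [Finset.filter_singleton, if_pos hpred, Finset.card_singleton]
  have hlow : ∃ a, π a = 1 ∧ ∀ b, le b a → b = a := by
    by_contra hno
    obtain ⟨c, hcH, hcd⟩ := hcov (E {0, 1})
    have hwv : wtP le π (c - E {0, 1}) ≤ 2 := hcd
    have huniq : ∀ i₁ i₂, (c - E {0, 1}) i₁ ≠ 0 → (c - E {0, 1}) i₂ ≠ 0 → i₁ = i₂ := by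
      intro i₁ i₂ hn1 hn2
      by_contra hne12
      exact hno (key_lemma le hrefl hantisymm π hπ _ hwv i₁ i₂ hne12 hn1 hn2)
    have hcH' : (∑ i, c i) = 0 ∧ ∀ j < 3,
        (∑ i ∈ Finset.univ.filter (fun i : Fin (2 ^ 3) => Nat.testBit i.val j), c i) = 0 := hcH
    by_cases h0 : ∀ i, (c - E {0, 1}) i = 0
    · have hcx : c = E {0, 1} := by
        funext i
        exact sub_eq_zero.mp (h0 i)
      rw [hcx] at hcH'
      exact (by decide : ¬ ((∑ i, E ({0,1} : Finset (Fin (2 ^ 3))) i) = 0 ∧ ∀ j < 3,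
        (∑ i ∈ Finset.univ.filter (fun i : Fin (2 ^ 3) => Nat.testBit i.val j),
          E ({0,1} : Finset (Fin (2 ^ 3))) i) = 0)) hcH'
    · push_neg at h0
      obtain ⟨a, ha⟩ := h0
      have hsv : (∑ i, (c - E {0, 1}) i) = (c - E {0, 1}) a := by
        apply Finset.sum_eq_single a
        · intro b _ hba
          by_contra hb
          exact hba (huniq b a hb ha)
        · intro h; exact absurd (Finset.mem_univ a) h
      have hva : (c - E {0, 1}) a = 1 := by
        have h2 : ∀ z : ZMod 2, z ≠ 0 → z = 1 := by decide
        exact h2 _ ha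
      have hsplit : (∑ i, c i) = (∑ i, (c - E {0, 1}) i) + (∑ i, E ({0,1} : Finset (Fin (2 ^ 3))) i) := by
        rw [← Finset.sum_add_distrib]
        apply Finset.sum_congr rfl
        intro i _
        show c i = (c - E {0, 1}) i + E {0, 1} i
        simp
      have hEsum : (∑ i, E ({0,1} : Finset (Fin (2 ^ 3))) i) = 0 := by decide
      have hcsum := hcH'.1
      rw [hsplit, hsv, hva, hEsum] at hcsum
      exact absurd hcsum (by decide)
  have hup : S.card ≤ 4 := by
    by_contra hgt
    push_neg at hgt
    obtain ⟨s, hsS, hs5⟩ := Finset.exists_subset_card_eq (show 5 ≤ S.card by omega)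
    obtain ⟨p, hpl, hps⟩ := planes_sub s hs5
    obtain ⟨hp4, hpsum, hpbits⟩ := planes_prop p hpl
    have hpS : ∀ a ∈ p, π a = 1 ∧ ∀ b, le b a → b = a := by
      intro a hap
      have haS : a ∈ S := hsS (hps hap)
      rw [hSdef, Finset.mem_filter] at haS
      exact haS.2
    have hpne : p.Nonempty := Finset.card_pos.mp (by rw [hp4]; norm_num)
    obtain ⟨a, hap⟩ := hpne
    have hep : (p.erase a).Nonempty := Finset.card_pos.mp (by
      rw [Finset.card_erase_of_mem hap, hp4]; norm_num)
    obtain ⟨b, hbp'⟩ := hep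
    have hba : b ≠ a := Finset.ne_of_mem_erase hbp'
    have hbp : b ∈ p := Finset.mem_of_mem_erase hbp'
    have habs : ({a, b} : Finset (Fin (2 ^ 3))) ⊆ p := by
      intro z hz
      rcases Finset.mem_insert.mp hz with rfl | hz
      · exact hap
      · exact (Finset.mem_singleton.mp hz) ▸ hbp
    have hcard2 : ({a, b} : Finset (Fin (2 ^ 3))).card = 2 := Finset.card_pair (Ne.symm hba)
    have hwx : wtP le π (E {a, b}) = 2 := by
      rw [wtP_E le hrefl π {a, b} (fun z hz => hpS z (habs hz)), hcard2]
    have hdiff : E p - E {a, b} = E (p \ {a, b}) := E_sub habs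
    have hw2 : wtP le π (E (p \ {a, b})) = 2 := by
      rw [wtP_E le hrefl π _ (fun z hz => hpS z (Finset.mem_sdiff.mp hz).1),
        Finset.card_sdiff_of_subset habs, hp4, hcard2]
    have hpH : E p ∈ extHamming 3 := ⟨hpsum, hpbits⟩
    have h0H : (0 : Fin (2 ^ 3) → ZMod 2) ∈ extHamming 3 := ⟨by simp, fun j _ => by simp⟩
    have hne0 : (0 : Fin (2 ^ 3) → ZMod 2) ≠ E p := by
      intro h
      have h2 := congrFun h a
      simp [E, hap] at h2
    apply hpack 0 h0H (E p) hpH hne0 (E {a, b})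
    constructor
    · show wtP le π (0 - E {a, b}) ≤ 2
      rw [zero_sub, neg_eq_self', hwx]
    · show wtP le π (E p - E {a, b}) ≤ 2
      rw [hdiff, hw2]
  constructor
  · rw [hOmega]
    obtain ⟨a, ha⟩ := hlow
    have haS : a ∈ S := by
      rw [hSdef, Finset.mem_filter]
      exact ⟨Finset.mem_univ a, ha⟩
    exact Finset.card_pos.mpr ⟨a, haS⟩
  · rw [hOmega]; exact hup
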